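/- Let p be a prime, let n, m, s, k, i be nonnegative integers with n ≥ m, s ≥ 1, 0 ≤ k ≤ p^(s−1) − 1 and 1 ≤ i ≤ p−2. If C(n·p^s, m·p^s + k·p + i) · (k·p + i) ≡ (−1)^(k·p+i−1) · (m+1) · C(n, m+1) · p^s (mod p^(s+1)), then C(n·p^s, m·p^s + k·p + i + 1) · (k·p + i + 1) ≡ (−1)^(k·p+i) · (m+1) · C(n, m+1) · p^s (mod p^(s+1)). -/

import Mathlib

lemma choose_succ_int (N j : ℕ) :
    ((N.choose (j+1) : ℤ)) * (j+1) = (N.choose j : ℤ) * N - (N.choose j : ℤ) * j := by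
  rcases le_or_gt j N with h | h
  · have h2 := congrArg (Nat.cast : ℕ → ℤ) (Nat.choose_succ_right_eq N j)
    push_cast [h] at h2
    linarith
  · rw [Nat.choose_eq_zero_of_lt h, Nat.choose_eq_zero_of_lt (by omega)]
    push_cast; ring

theorem stmt11 (p n m s k i : ℕ) (hp : p.Prime) (hmn : m ≤ n) (hs : 1 ≤ s)
    (hk : k ≤ p ^ (s - 1) - 1) (hi1 : 1 ≤ i) (hi2 : i ≤ p - 2)
    (hind : (((n * p ^ s).choose (m * p ^ s + k * p + i) : ℤ)) * (k * p + i) ≡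
      (-1) ^ (k * p + i - 1) * (m + 1) * (n.choose (m + 1)) * (p : ℤ) ^ s
      [ZMOD ((p : ℤ) ^ (s + 1))]) :
    (((n * p ^ s).choose (m * p ^ s + k * p + i + 1) : ℤ)) * (k * p + i + 1) ≡
      (-1) ^ (k * p + i) * (m + 1) * (n.choose (m + 1)) * (p : ℤ) ^ s
      [ZMOD ((p : ℤ) ^ (s + 1))] := by
  have hp2 := hp.two_le
  have hpZ : Prime (p : ℤ) := Nat.prime_iff_prime_int.mp hp
  set C1 : ℤ := (((n * p ^ s).choose (m * p ^ s + k * p + i) : ℕ) : ℤ) with hC1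
  set C2 : ℤ := (((n * p ^ s).choose (m * p ^ s + k * p + i + 1) : ℕ) : ℤ) with hC2
  set A : ℤ := ((m : ℤ) + 1) * (n.choose (m + 1)) * (p : ℤ) ^ s with hA
  have hndvd : ¬ (p : ℤ) ∣ ((k : ℤ) * p + i) := by
    intro hd
    have h1 : (p : ℤ) ∣ (i : ℤ) := (dvd_add_right ⟨(k : ℤ), by ring⟩).mp hd
    have h2 : p ∣ i := Int.ofNat_dvd.mp h1
    have := Nat.le_of_dvd (by omega) h2
    omega
  have hndvd2 : ¬ (p : ℤ) ∣ ((m : ℤ) * (p:ℤ)^s + (k : ℤ) * p + i + 1) := by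
    intro hd
    have hps : (p : ℤ) ∣ (m : ℤ) * (p:ℤ)^s := Dvd.dvd.mul_left (dvd_pow_self _ (by omega)) _
    have hd2 : (p : ℤ) ∣ ((k : ℤ) * p + ((i : ℤ) + 1)) := by
      have := dvd_sub hd hps; rw [show ((k : ℤ) * p + ((i : ℤ) + 1)) = (m : ℤ) * (p:ℤ)^s + (k : ℤ) * p + i + 1 - (m : ℤ) * (p:ℤ)^s by ring]; exact this
    have h1 : (p : ℤ) ∣ ((i : ℤ) + 1) := (dvd_add_right ⟨(k : ℤ), by ring⟩).mp hd2
    have h1' : (p : ℤ) ∣ ((i + 1 : ℕ) : ℤ) := by exact_mod_cast h1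
    have h2 : p ∣ i + 1 := Int.ofNat_dvd.mp h1'
    have := Nat.le_of_dvd (by omega) h2
    omega
  have hdiff := Int.ModEq.dvd hind
  have hdvdC1 : (p:ℤ)^s ∣ C1 := by
    have hcop : IsCoprime ((p:ℤ)^s) ((k:ℤ) * p + i) :=
      ((hpZ.coprime_iff_not_dvd).mpr hndvd).pow_left
    apply hcop.dvd_of_dvd_mul_right
    have h1 : (p:ℤ)^s ∣ ((-1:ℤ) ^ (k * p + i - 1) * ((m : ℤ) + 1) * (n.choose (m + 1)) * (p:ℤ)^s) :=
      Dvd.intro_left _ rfl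
    have h2 := dvd_trans (pow_dvd_pow ((p:ℤ)) (Nat.le_succ s)) hdiff
    have h3 := dvd_sub h1 h2
    simpa using h3
  obtain ⟨c, hc⟩ := hdvdC1
  obtain ⟨t, ht⟩ := hdiff
  have key : C2 * ((m:ℤ)*(p:ℤ)^s + (k:ℤ)*p + i + 1) =
      C1 * ((n:ℤ)*(p:ℤ)^s) - C1 * ((m:ℤ)*(p:ℤ)^s + (k:ℤ)*p + i) := by
    have h := choose_succ_int (n * p ^ s) (m * p ^ s + k * p + i)
    rw [hC1, hC2]
    push_cast at h ⊢
    linarith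
  have hdvdC2 : (p:ℤ)^s ∣ C2 := by
    have hcop : IsCoprime ((p:ℤ)^s) ((m:ℤ)*(p:ℤ)^s + (k:ℤ)*p + i + 1) :=
      ((hpZ.coprime_iff_not_dvd).mpr hndvd2).pow_left
    apply hcop.dvd_of_dvd_mul_right
    rw [key]
    exact dvd_sub ⟨c * ((n:ℤ)*(p:ℤ)^s), by rw [hc]; ring⟩
      ⟨c * ((m:ℤ)*(p:ℤ)^s + (k:ℤ)*p + i), by rw [hc]; ring⟩
  obtain ⟨d, hd⟩ := hdvdC2
  have hsign : (-1:ℤ)^(k*p+i) = -(-1:ℤ)^(k*p+i-1) := by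
    have he : k*p+i = (k*p+i-1)+1 := by omega
    conv_lhs => rw [he]
    rw [pow_succ]; ring
  have hps2 : ((p:ℤ)^s) * ((p:ℤ)^s) = (p:ℤ)^(s+1) * (p:ℤ)^(s-1) := by
    rw [← pow_add, ← pow_add]; congr 1; omega
  rw [Int.modEq_iff_dvd]
  refine ⟨-t - (p:ℤ)^(s-1) * ((n:ℤ)*c - (m:ℤ)*c - (m:ℤ)*d), ?_⟩
  rw [hsign]
  linear_combination (-1:ℤ)*ht - key + ((m:ℤ)*(p:ℤ)^s)*hd +
    ((m:ℤ)*(p:ℤ)^s - (n:ℤ)*(p:ℤ)^s)*hc + ((m:ℤ)*d + (m:ℤ)*c - (n:ℤ)*c)*hps2
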